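/- Let X be a non-empty κ-strongly irreducible subshift of Q^M, let F be a finite subset of M, let θ be a non-negative integer, let T be a subset of M such that d(B(t,θ), B(t',θ)) ≥ κ + 1 for all distinct t, t' ∈ T, and for each t ∈ T let p_t ∈ X_{B(t,θ)}. Let ξ be the positive integer |X_{B(θ)^{+κ}}|, let S' be the finite set T ∩ F^{-(θ+κ)}, and for each s ∈ S' let π_s : X_F → X_{B(s,θ)} be the restriction map p ↦ p↾_{B(s,θ)}. Then |X_F ∖ ⋃_{s∈S'} π_s^{-1}(p_s)| ≤ (1 − ξ^{-1})^{|S'|} · |X_F|. -/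

import Mathlib

open Filter Set

namespace GoE

variable {G M Q : Type*}

/-- A left homogeneous space `⟨M, G, ▷⟩` together with a coordinate system
`⟨m₀, (g_{m₀,m})_{m∈M}⟩`: a cell space with finite stabiliser `G₀` of `m₀`. -/
structure CellSpace (G M : Type*) [Group G] where
  act : G → M → M
  one_act : ∀ m : M, act 1 m = m
  mul_act : ∀ (g h : G) (m : M), act (g * h) m = act g (act h m)
  transitive : ∀ m m' : M, ∃ g : G, act g m = m'
  m0 : M
  coord : M → G
  coord_act : ∀ m : M, act (coord m) m0 = m
  stab_finite : {g : G | act g m0 = m0}.Finite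

variable [Group G]

namespace CellSpace

/-- Membership in the stabiliser `G₀` of `m₀`. -/
def stab (R : CellSpace G M) (g : G) : Prop := R.act g R.m0 = R.m0

/-- The induced right semi-action `m ↝ gG₀ = g_{m₀,m} g ▷ m₀`, on representatives. -/
def sAct (R : CellSpace G M) (m : M) (g : G) : M := R.act (R.coord m * g) R.m0

/-- `m ↝ ι n` where `ι : M → G/G₀`, `n ↦ G_{m₀,n}` is the canonical identification. -/
def nAct (R : CellSpace G M) (m n : M) : M := R.act (R.coord m * R.coord n) R.m0

/-- `S ⊆ G` represents a finite symmetric right generating set of cosets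
(`G₀ · S ⊆ S`, `S⁻¹ ⊆ S`, and `S` generates). -/
structure IsRightGenSet (R : CellSpace G M) (S : Set G) : Prop where
  finite : S.Finite
  saturated : ∀ s ∈ S, ∀ g₀ : G, R.stab g₀ → s * g₀ ∈ S
  stab_mul : ∀ g₀ : G, R.stab g₀ → ∀ s ∈ S, g₀ * s ∈ S
  symm : ∀ s ∈ S, s⁻¹ ∈ S
  generates : ∀ m : M, ∃ (k : ℕ) (f : ℕ → M), f 0 = R.m0 ∧ f k = m ∧
    ∀ i < k, ∃ s ∈ S, f (i + 1) = R.sAct (f i) s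

/-- There is an `S`-path of length `n` from `m` to `m'` in the `S`-Cayley graph. -/
def Chain (R : CellSpace G M) (S : Set G) (m m' : M) (n : ℕ) : Prop :=
  ∃ f : ℕ → M, f 0 = m ∧ f n = m' ∧ ∀ i < n, ∃ s ∈ S, f (i + 1) = R.sAct (f i) s

/-- The `S`-metric `d`. -/
noncomputable def dist (R : CellSpace G M) (S : Set G) (m m' : M) : ℕ :=
  sInf {n : ℕ | R.Chain S m m' n}

/-- The ball `B(m, ρ)` of radius `ρ` centred at `m`. -/
noncomputable def ball (R : CellSpace G M) (S : Set G) (m : M) (ρ : ℕ) : Set M :=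
  {m' : M | R.dist S m m' ≤ ρ}

/-- The `θ`-interior `A^{-θ}` of `A`. -/
noncomputable def inter (R : CellSpace G M) (S : Set G) (A : Set M) (θ : ℕ) : Set M :=
  {m ∈ A | R.ball S m θ ⊆ A}

/-- The `θ`-closure `A^{+θ}` of `A`. -/
noncomputable def clos (R : CellSpace G M) (S : Set G) (A : Set M) (θ : ℕ) : Set M :=
  {m : M | (R.ball S m θ ∩ A).Nonempty}

/-- The external `θ`-boundary `∂θ⁺A = A^{+θ} ∖ A`. -/
noncomputable def extB (R : CellSpace G M) (S : Set G) (A : Set M) (θ : ℕ) : Set M :=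
  R.clos S A θ \ A

/-- The internal `θ`-boundary `∂θ⁻A = A ∖ A^{-θ}`. -/
noncomputable def intB (R : CellSpace G M) (S : Set G) (A : Set M) (θ : ℕ) : Set M :=
  A \ R.inter S A θ

/-- The `θ`-boundary `∂θA = A^{+θ} ∖ A^{-θ}`. -/
noncomputable def bdry (R : CellSpace G M) (S : Set G) (A : Set M) (θ : ℕ) : Set M :=
  R.clos S A θ \ R.inter S A θ

end CellSpace

/-- The set `X_A` of restrictions to `A` of the elements of `X`. -/
def restr (A : Set M) (X : Set (M → Q)) : Set (A → Q) :=
  (fun x : M → Q => A.restrict x) '' X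

/-- The pattern `p` (with domain `A`) semi-occurs in the configuration `c`:
there is `h ∈ H` with `h ⊛ p = c↾_{h ▷ dom p}`. -/
def SemiOccurs (R : CellSpace G M) (H : Subgroup G) {A : Set M} (p : A → Q)
    (c : M → Q) : Prop :=
  ∃ h ∈ H, ∀ a : A, c (R.act h ↑a) = p a

/-- The pattern `p` (with domain `A`) occurs at `t` in the configuration `c`:
`t ⊛' p = c↾_{t ↝ A}`. -/
def OccursAt (R : CellSpace G M) {A : Set M} (p : A → Q) (t : M) (c : M → Q) : Prop :=
  ∀ a : A, c (R.nAct t ↑a) = p a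

/-- The pattern `p` is allowed in `X`: it semi-occurs in some point of `X`. -/
def Allowed (R : CellSpace G M) (H : Subgroup G) (X : Set (M → Q)) {A : Set M}
    (p : A → Q) : Prop :=
  ∃ x ∈ X, SemiOccurs R H p x

/-- The set `⟨𝔉⟩` generated by a set `𝔉` of forbidden patterns. -/
def Generated (R : CellSpace G M) (H : Subgroup G) (𝔉 : Set (Σ A : Set M, A → Q)) :
    Set (M → Q) :=
  {c : M → Q | ∀ f ∈ 𝔉, ¬ SemiOccurs R H f.2 c}

/-- `X` is a subshift of `Q^M`: it is generated by a set of blocks. -/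
def IsSubshift (R : CellSpace G M) (H : Subgroup G) (X : Set (M → Q)) : Prop :=
  ∃ 𝔉 : Set (Σ A : Set M, A → Q), (∀ f ∈ 𝔉, f.1.Finite) ∧ X = Generated R H 𝔉

/-- `X` is a subshift of finite type: it is generated by a finite set of blocks. -/
def IsSubshiftFT (R : CellSpace G M) (H : Subgroup G) (X : Set (M → Q)) : Prop :=
  ∃ 𝔉 : Set (Σ A : Set M, A → Q), 𝔉.Finite ∧ (∀ f ∈ 𝔉, f.1.Finite) ∧
    X = Generated R H 𝔉

/-- `X` is a `κ`-step subshift: it is generated by a set of `B(κ)`-blocks. -/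
def IsStep (R : CellSpace G M) (S : Set G) (H : Subgroup G) (X : Set (M → Q))
    (κ : ℕ) : Prop :=
  ∃ 𝔉 : Set (Σ A : Set M, A → Q), (∀ f ∈ 𝔉, f.1 = R.ball S R.m0 κ) ∧
    X = Generated R H 𝔉

/-- `X` is `κ`-strongly irreducible. -/
def IsStronglyIrr (R : CellSpace G M) (S : Set G) (H : Subgroup G)
    (X : Set (M → Q)) (κ : ℕ) : Prop :=
  ∀ (A B : Set M), A.Finite → B.Finite → ∀ (p : A → Q) (p' : B → Q),
    Allowed R H X p → Allowed R H X p' →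
    (∀ a ∈ A, ∀ b ∈ B, κ + 1 ≤ R.dist S a b) →
    ∃ x ∈ X, A.restrict x = p ∧ B.restrict x = p'

/-- `X` has `ρ`-bounded propagation. -/
def HasBoundedProp (R : CellSpace G M) (S : Set G) (X : Set (M → Q)) (ρ : ℕ) : Prop :=
  ∀ F : Set M, F.Finite → ∀ p : F → Q,
    (∀ f ∈ F, ∃ x ∈ X, ∀ (m : M) (hm : m ∈ R.ball S f ρ ∩ F), p ⟨m, hm.2⟩ = x m) →
    ∃ x ∈ X, F.restrict x = p

/-- `Δ` is a `κ`-local map from `X` to `Y`. -/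
def IsLocalMap (R : CellSpace G M) (S : Set G) (H : Subgroup G)
    (X Y : Set (M → Q)) (Δ : (M → Q) → (M → Q)) (κ : ℕ) : Prop :=
  Set.MapsTo Δ X Y ∧
  ∃ N : Set M, N ⊆ R.ball S R.m0 κ ∧
    (∀ g₀ : G, R.stab g₀ → ∀ n ∈ N, R.act g₀ n ∈ N) ∧
    ∃ δ : (N → Q) → Q,
      (∀ h₀ ∈ H, R.stab h₀ →
        ∀ ℓ ∈ restr N X, ∀ ℓ' : N → Q,
          (∀ (n : M) (hn : n ∈ N) (hn' : R.act h₀⁻¹ n ∈ N),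
            ℓ' ⟨n, hn⟩ = ℓ ⟨R.act h₀⁻¹ n, hn'⟩) →
          δ ℓ' = δ ℓ) ∧
      ∀ x ∈ X, ∀ m : M, Δ x m = δ (fun n : N => x (R.nAct m ↑n))

/-- `Δ` is pre-injective on `X`. -/
def PreInjective (X : Set (M → Q)) (Δ : (M → Q) → (M → Q)) : Prop :=
  ∀ x ∈ X, ∀ x' ∈ X, Δ x = Δ x' → {m : M | x m ≠ x' m}.Finite → x = x'

/-- The cell space `R` is right amenable: there is a finitely additive probability
measure on the power set of `M` that is semi-invariant under the right semi-action. -/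
def RightAmenable (R : CellSpace G M) : Prop :=
  ∃ μ : Set M → ℝ, (∀ A : Set M, 0 ≤ μ A) ∧ μ Set.univ = 1 ∧
    (∀ A B : Set M, Disjoint A B → μ (A ∪ B) = μ A + μ B) ∧
    ∀ (g : G) (A : Set M), Set.InjOn (fun m => R.sAct m g) A →
      μ ((fun m => R.sAct m g) '' A) = μ A

/-- `F` is a right Følner net in `R` (indexed by the directed set `I`). -/
def IsFolnerNet (R : CellSpace G M) (S : Set G) {I : Type*} [Preorder I]
    (F : I → Set M) : Prop :=
  (∀ i, (F i).Nonempty) ∧ (∀ i, (F i).Finite) ∧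
  ∀ ρ : ℕ, Tendsto (fun i => ((R.bdry S (F i) ρ).ncard : ℝ) / ((F i).ncard : ℝ))
    atTop (nhds 0)

/-- The entropy of `X ⊆ Q^M` with respect to the net `F`:
`limsup_i log|X_{F_i}| / |F_i|`. -/
noncomputable def entropy (R : CellSpace G M) (S : Set G) {I : Type*} [Preorder I]
    (F : I → Set M) (X : Set (M → Q)) : ℝ :=
  limsup (fun i => Real.log ((restr (F i) X).ncard : ℝ) / ((F i).ncard : ℝ)) atTop

/-- `T` is a `⟨θ, κ, θ'⟩`-tiling of `R`. -/
def IsTiling (R : CellSpace G M) (S : Set G) (θ κ θ' : ℕ) (T : Set M) : Prop :=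
  (∀ t ∈ T, ∀ t' ∈ T, t ≠ t' →
    ∀ a ∈ R.ball S t θ, ∀ b ∈ R.ball S t' θ, κ + 1 ≤ R.dist S a b) ∧
  ∀ m : M, ∃ t ∈ T, m ∈ R.ball S t θ'

/-- The action `h ⊛ c` of `h ∈ G` on configurations: `(h ⊛ c)(m) = c(h⁻¹ ▷ m)`. -/
def shiftAct (R : CellSpace G M) (h : G) (c : M → Q) : M → Q :=
  fun m => c (R.act h⁻¹ m)

set_option linter.unusedVariables false
set_option linter.unusedSectionVars false
set_option linter.unnecessarySimpa false

section Aux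
variable [Group G] (R : CellSpace G M)

lemma act_act (g h : G) (m : M) : R.act g (R.act h m) = R.act (g * h) m :=
  (R.mul_act g h m).symm

lemma act_inv_act (g : G) (m : M) : R.act g⁻¹ (R.act g m) = m := by
  rw [act_act, inv_mul_cancel, R.one_act]

lemma act_act_inv (g : G) (m : M) : R.act g (R.act g⁻¹ m) = m := by
  rw [act_act, mul_inv_cancel, R.one_act]

lemma stab_of_eq {g g' : G} (h : R.act g R.m0 = R.act g' R.m0) :
    R.stab (g'⁻¹ * g) := by
  show R.act _ _ = _
  rw [R.mul_act, h, act_inv_act]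

lemma stab_inv {g : G} (h : R.stab g) : R.stab g⁻¹ := by
  unfold CellSpace.stab at *
  conv_lhs => rw [← h, act_inv_act]

end Aux

section Chains
variable [Group G] (R : CellSpace G M) (S : Set G)

lemma chain_refl (m : M) : R.Chain S m m 0 :=
  ⟨fun _ => m, rfl, rfl, fun i hi => absurd hi (Nat.not_lt_zero i)⟩

lemma chain_trans {m m' m'' : M} {n n' : ℕ} (h : R.Chain S m m' n)
    (h' : R.Chain S m' m'' n') : R.Chain S m m'' (n + n') := by
  obtain ⟨f, hf0, hfn, hf⟩ := h
  obtain ⟨g, hg0, hgn, hg⟩ := h'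
  refine ⟨fun i => if i < n then f i else g (i - n), ?_, ?_, ?_⟩
  · by_cases hn : 0 < n
    · simp [hn, hf0]
    · have : n = 0 := by omega
      subst this; simpa [hg0, ← hfn, hf0]
  · simp only [show ¬ (n + n' < n) by omega, if_false]
    simpa using hgn
  · intro i hi
    by_cases h1 : i + 1 < n
    · have h2 : i < n := by omega
      obtain ⟨s, hs, hstep⟩ := hf i h2
      exact ⟨s, hs, by simp only [h1, h2, if_true]; exact hstep⟩
    · by_cases h2 : i < n
      · have h3 : i + 1 = n := by omega
        obtain ⟨s, hs, hstep⟩ := hf i h2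
        refine ⟨s, hs, ?_⟩
        show (if i + 1 < n then f (i+1) else g (i + 1 - n)) =
          R.sAct (if i < n then f i else g (i - n)) s
        simp only [h1, h2, if_true, if_false]
        rw [show i + 1 - n = 0 by omega, hg0, ← hfn, ← h3]
        exact hstep
      · have h3 : ¬ (i + 1 < n) := by omega
        obtain ⟨s, hs, hstep⟩ := hg (i - n) (by omega)
        refine ⟨s, hs, ?_⟩
        show (if i + 1 < n then f (i+1) else g (i + 1 - n)) =
          R.sAct (if i < n then f i else g (i - n)) s
        simp only [h2, h3, if_false]
        rw [show i + 1 - n = i - n + 1 by omega]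
        exact hstep

variable {S} in
lemma sAct_rev (hS : R.IsRightGenSet S) {m₁ m₂ : M} {s : G} (hs : s ∈ S)
    (h : m₂ = R.sAct m₁ s) : ∃ s' ∈ S, m₁ = R.sAct m₂ s' := by
  have hstab : R.stab ((R.coord m₁ * s)⁻¹ * R.coord m₂) := by
    apply stab_of_eq
    rw [R.coord_act, h]; rfl
  set g₀ := (R.coord m₁ * s)⁻¹ * R.coord m₂ with hg₀
  refine ⟨g₀⁻¹ * s⁻¹, hS.stab_mul g₀⁻¹ (stab_inv R hstab) s⁻¹ (hS.symm s hs), ?_⟩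
  have hc : R.coord m₂ = R.coord m₁ * s * g₀ := by
    rw [hg₀]; group
  show m₁ = R.act _ _
  rw [hc, show R.coord m₁ * s * g₀ * (g₀⁻¹ * s⁻¹) = R.coord m₁ by group, R.coord_act]

variable {S} (hS : R.IsRightGenSet S)
include hS

lemma chain_symm {m m' : M} {n : ℕ} (h : R.Chain S m m' n) : R.Chain S m' m n := by
  obtain ⟨f, hf0, hfn, hf⟩ := h
  refine ⟨fun i => f (n - i), by simpa, by simpa, ?_⟩
  intro i hi
  obtain ⟨s, hs, hstep⟩ := hf (n - i - 1) (by omega)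
  obtain ⟨s', hs', hrev⟩ := sAct_rev R hS hs hstep.symm.symm
  refine ⟨s', hs', ?_⟩
  show f (n - (i + 1)) = R.sAct (f (n - i)) s'
  rw [show n - (i+1) = n - i - 1 by omega, show n - i = n - i - 1 + 1 by omega]
  exact hrev

lemma chain_exists (m m' : M) : ∃ n, R.Chain S m m' n := by
  obtain ⟨k, f, hf0, hfk, hf⟩ := hS.generates m
  obtain ⟨k', f', hf0', hfk', hf'⟩ := hS.generates m'
  exact ⟨k + k', chain_trans R S (chain_symm R hS ⟨f, hf0, hfk, hf⟩)
    ⟨f', hf0', hfk', hf'⟩⟩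

lemma chain_dist (m m' : M) : R.Chain S m m' (R.dist S m m') :=
  Nat.sInf_mem (chain_exists R hS m m')

omit hS in
lemma dist_le_of_chain {m m' : M} {n : ℕ} (h : R.Chain S m m' n) :
    R.dist S m m' ≤ n := Nat.sInf_le h

lemma dist_triangle (m m' m'' : M) :
    R.dist S m m'' ≤ R.dist S m m' + R.dist S m' m'' :=
  dist_le_of_chain R (chain_trans R S (chain_dist R hS m m') (chain_dist R hS m' m''))

lemma dist_symm (m m' : M) : R.dist S m m' = R.dist S m' m :=
  le_antisymm (dist_le_of_chain R (chain_symm R hS (chain_dist R hS m' m)))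
    (dist_le_of_chain R (chain_symm R hS (chain_dist R hS m m')))

lemma chain_map (g : G) {m m' : M} {n : ℕ} (h : R.Chain S m m' n) :
    R.Chain S (R.act g m) (R.act g m') n := by
  obtain ⟨f, hf0, hfn, hf⟩ := h
  refine ⟨fun i => R.act g (f i), by show R.act g (f 0) = _; rw [hf0],
    by show R.act g (f n) = _; rw [hfn], ?_⟩
  intro i hi
  obtain ⟨s, hs, hstep⟩ := hf i hi
  have hstab : R.stab ((g * R.coord (f i))⁻¹ * R.coord (R.act g (f i))) := by
    apply stab_of_eq
    rw [R.coord_act, R.mul_act, R.coord_act]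
  set g₀ := (g * R.coord (f i))⁻¹ * R.coord (R.act g (f i)) with hg₀
  refine ⟨g₀⁻¹ * s, hS.stab_mul g₀⁻¹ (stab_inv R hstab) s hs, ?_⟩
  have hc : R.coord (R.act g (f i)) = g * R.coord (f i) * g₀ := by rw [hg₀]; group
  show R.act g (f (i+1)) = R.act (R.coord (R.act g (f i)) * (g₀⁻¹ * s)) R.m0
  rw [hstep, hc]
  show R.act g (R.act (R.coord (f i) * s) R.m0) = _
  rw [act_act]
  congr 1
  group

lemma dist_map (g : G) (m m' : M) :
    R.dist S (R.act g m) (R.act g m') = R.dist S m m' := by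
  refine le_antisymm (dist_le_of_chain R (chain_map R hS g (chain_dist R hS m m'))) ?_
  have := chain_map R hS g⁻¹ (chain_dist R hS (R.act g m) (R.act g m'))
  rw [act_inv_act, act_inv_act] at this
  exact dist_le_of_chain R this

end Chains
section Balls
variable [Group G] (R : CellSpace G M) {S : Set G} (hS : R.IsRightGenSet S)

lemma self_mem_ball (m : M) (ρ : ℕ) : m ∈ R.ball S m ρ := by
  have : R.dist S m m ≤ 0 := dist_le_of_chain R (chain_refl R S m)
  show R.dist S m m ≤ ρ
  omega

include hS in
lemma ball_translate (g : G) (m : M) (ρ : ℕ) :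
    R.ball S (R.act g m) ρ = R.act g '' R.ball S m ρ := by
  ext m'
  constructor
  · intro hm'
    refine ⟨R.act g⁻¹ m', ?_, act_act_inv R g m'⟩
    show R.dist S m (R.act g⁻¹ m') ≤ ρ
    have := dist_map R hS g⁻¹ (R.act g m) m'
    rw [act_inv_act] at this
    rw [this]; exact hm'
  · rintro ⟨a, ha, rfl⟩
    show R.dist S (R.act g m) (R.act g a) ≤ ρ
    rw [dist_map R hS]; exact ha

include hS in
lemma clos_translate (g : G) (A : Set M) (κ : ℕ) :
    R.clos S (R.act g '' A) κ = R.act g '' R.clos S A κ := by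
  ext m
  constructor
  · rintro ⟨b, hb1, a, ha, rfl⟩
    refine ⟨R.act g⁻¹ m, ⟨R.act g⁻¹ (R.act g a), ?_, ?_⟩, act_act_inv R g m⟩
    · show R.dist S (R.act g⁻¹ m) _ ≤ κ
      rw [dist_map R hS]; exact hb1
    · rw [act_inv_act]; exact ha
  · rintro ⟨n, ⟨b, hb1, hb2⟩, rfl⟩
    refine ⟨R.act g b, ?_, b, hb2, rfl⟩
    show R.dist S (R.act g n) (R.act g b) ≤ κ
    rw [dist_map R hS]; exact hb1

include hS in
lemma ball_subset_ball (m : M) {ρ ρ' : ℕ} (h : ρ ≤ ρ') :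
    R.ball S m ρ ⊆ R.ball S m ρ' := fun m' hm' => le_trans hm' h

include hS in
lemma clos_ball_subset (s : M) (θ κ : ℕ) :
    R.clos S (R.ball S s θ) κ ⊆ R.ball S s (θ + κ) := by
  rintro m ⟨a, ha1, ha2⟩
  show R.dist S s m ≤ θ + κ
  calc R.dist S s m ≤ R.dist S s a + R.dist S a m := dist_triangle R hS s a m
    _ = R.dist S s a + R.dist S m a := by rw [dist_symm R hS a m]
    _ ≤ θ + κ := Nat.add_le_add ha2 ha1

lemma ball_subset_clos (s : M) (θ κ : ℕ) :
    R.ball S s θ ⊆ R.clos S (R.ball S s θ) κ := fun m hm =>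
  ⟨m, self_mem_ball R m κ, hm⟩

end Balls

section Shift
variable [Group G] (R : CellSpace G M) (H : Subgroup G) {X : Set (M → Q)}

lemma shift_mem (hX : IsSubshift R H X) {h : G} (hh : h ∈ H) {x : M → Q}
    (hx : x ∈ X) : shiftAct R h x ∈ X := by
  obtain ⟨𝔉, -, rfl⟩ := hX
  intro f hf hocc
  obtain ⟨h', hh', heq⟩ := hocc
  refine hx f hf ⟨h⁻¹ * h', mul_mem (inv_mem hh) hh', fun a => ?_⟩
  have := heq a
  unfold shiftAct at this
  rw [act_act] at this
  exact this

/-- Restriction of a point of `X` to a set is in `restr`. -/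
lemma restrict_mem_restr {x : M → Q} (hx : x ∈ X) (A : Set M) :
    A.restrict x ∈ restr A X := ⟨x, hx, rfl⟩

/-- Any pattern of `restr A X` is allowed. -/
lemma allowed_of_mem_restr {A : Set M} {q : ↥A → Q} (hq : q ∈ restr A X) :
    Allowed R H X q := by
  obtain ⟨x, hx, rfl⟩ := hq
  exact ⟨x, hx, 1, one_mem H, fun a => by rw [R.one_act]; rfl⟩

/-- Translation injection between restriction sets. -/
lemma ncard_restr_translate (hX : IsSubshift R H X) {g : G} (hg : g ∈ H)
    (A : Set M) (hfin : (restr A X).Finite) :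
    (restr (R.act g '' A) X).ncard ≤ (restr A X).ncard := by
  refine Set.ncard_le_ncard_of_injOn
    (fun q a => q ⟨R.act g a.1, Set.mem_image_of_mem _ a.2⟩) ?_ ?_ hfin
  · rintro q ⟨x, hx, rfl⟩
    refine ⟨shiftAct R g⁻¹ x, shift_mem R H hX (inv_mem hg) hx, ?_⟩
    funext a
    show x (R.act g⁻¹⁻¹ a.1) = x (R.act g a.1)
    rw [inv_inv]
  · rintro q hq q' hq' heq
    funext c
    obtain ⟨a, ha, hc⟩ := c.2
    have h1 : (⟨R.act g a, Set.mem_image_of_mem _ ha⟩ : ↥(R.act g '' A)) = c :=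
      Subtype.ext hc
    calc q c = q ⟨R.act g a, Set.mem_image_of_mem _ ha⟩ := by rw [h1]
      _ = q' ⟨R.act g a, Set.mem_image_of_mem _ ha⟩ := congrFun heq ⟨a, ha⟩
      _ = q' c := by rw [h1]

end Shift
lemma ncard_prod' {α β : Type*} (s : Set α) (t : Set β) :
    (s ×ˢ t).ncard = s.ncard * t.ncard := by
  rw [← Nat.card_coe_set_eq, ← Nat.card_coe_set_eq, ← Nat.card_coe_set_eq,
    Nat.card_congr (Equiv.Set.prod s t), Nat.card_prod]

section Core
variable [Group G] [Finite Q] (R : CellSpace G M) (S : Set G)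

/-- The core replacement step. -/
lemma core_step (hS : R.IsRightGenSet S)
    (H : Subgroup G) (hH : ∀ m : M, R.coord m ∈ H)
    (X : Set (M → Q)) (hX : IsSubshift R H X) (hXne : X.Nonempty)
    (κ : ℕ) (hsi : IsStronglyIrr R S H X κ)
    (F : Set M) (hF : F.Finite) (θ : ℕ)
    (T : Set M)
    (hT : ∀ t ∈ T, ∀ t' ∈ T, t ≠ t' →
      ∀ a ∈ R.ball S t θ, ∀ b ∈ R.ball S t' θ, κ + 1 ≤ R.dist S a b)
    (p : (t : M) → ↥(R.ball S t θ) → Q)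
    (hp : ∀ t ∈ T, p t ∈ restr (R.ball S t θ) X)
    (hΞ : (restr (R.clos S (R.ball S R.m0 θ) κ) X).Finite)
    (s : M) (hsT : s ∈ T) (hsF : s ∈ R.inter S F (θ + κ))
    (U : Set M) (hU : U ⊆ T) (hsU : s ∉ U) :
    (((restr F X \ ⋃ t ∈ U, {q : ↥F → Q |
          ∀ (m : M) (hm : m ∈ R.ball S t θ) (hmF : m ∈ F),
            q ⟨m, hmF⟩ = p t ⟨m, hm⟩}) \ {q : ↥F → Q |
          ∀ (m : M) (hm : m ∈ R.ball S s θ) (hmF : m ∈ F),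
            q ⟨m, hmF⟩ = p s ⟨m, hm⟩}).ncard : ℝ) ≤
      (1 - ((restr (R.clos S (R.ball S R.m0 θ) κ) X).ncard : ℝ)⁻¹) *
        ((restr F X \ ⋃ t ∈ U, {q : ↥F → Q |
          ∀ (m : M) (hm : m ∈ R.ball S t θ) (hmF : m ∈ F),
            q ⟨m, hmF⟩ = p t ⟨m, hm⟩}).ncard : ℝ) := by
  have hFsub : Finite ↥F := hF.to_subtype
  set E : M → Set (↥F → Q) := fun t => {q : ↥F → Q |
    ∀ (m : M) (hm : m ∈ R.ball S t θ) (hmF : m ∈ F),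
      q ⟨m, hmF⟩ = p t ⟨m, hm⟩} with hE
  set A : Set (↥F → Q) := restr F X \ ⋃ t ∈ U, E t with hA
  have hAfin : A.Finite := Set.toFinite A
  set ξ := (restr (R.clos S (R.ball S R.m0 θ) κ) X).ncard with hξ
  -- C and its basic properties
  set C : Set M := R.clos S (R.ball S s θ) κ with hC
  have hBF : R.ball S s θ ⊆ F :=
    (ball_subset_ball R hS s (by omega : θ ≤ θ + κ)).trans hsF.2
  have hCF : C ⊆ F := (clos_ball_subset R hS s θ κ).trans hsF.2
  -- the replacement map
  have claim : ∀ q ∈ A, ∃ r, (r ∈ A ∩ E s) ∧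
      ∀ (m : M) (hmF : m ∈ F), m ∉ C → r ⟨m, hmF⟩ = q ⟨m, hmF⟩ := by
    intro q hq
    obtain ⟨x, hx, rfl⟩ := hq.1
    set D : Set M := F \ C with hD
    have hdist : ∀ a ∈ D, ∀ b ∈ R.ball S s θ, κ + 1 ≤ R.dist S a b := by
      intro a ha b hb
      by_contra hcon
      exact ha.2 ⟨b, by show R.dist S a b ≤ κ; omega, hb⟩
    obtain ⟨z, hz, hz1, hz2⟩ := hsi D (R.ball S s θ) (hF.subset Set.diff_subset)
      (hF.subset hBF) (D.restrict x) (p s)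
      (allowed_of_mem_restr R H (restrict_mem_restr hx D))
      (allowed_of_mem_restr R H (hp s hsT)) hdist
    refine ⟨F.restrict z, ⟨⟨restrict_mem_restr hz F, ?_⟩, ?_⟩, ?_⟩
    · -- not in the union
      intro hmem
      simp only [Set.mem_iUnion] at hmem
      obtain ⟨t, htU, hrt⟩ := hmem
      have hqt : F.restrict x ∉ E t := by
        intro hqt
        exact hq.2 (Set.mem_biUnion htU hqt)
      rw [hE] at hqt
      simp only [Set.mem_setOf_eq, not_forall] at hqt
      obtain ⟨m, hm, hmF, hne⟩ := hqt
      have hmD : m ∈ D := by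
        refine ⟨hmF, ?_⟩
        rintro ⟨a, ha1, ha2⟩
        have := hT t (hU htU) s hsT (fun h => hsU (h ▸ htU)) m hm a ha2
        have : R.dist S m a ≤ κ := ha1
        omega
      have h1 : F.restrict z ⟨m, hmF⟩ = F.restrict x ⟨m, hmF⟩ := by
        have := congrFun hz1 ⟨m, hmD⟩
        exact this
      exact hne (h1 ▸ hrt m hm hmF)
    · -- in E s
      intro m hm hmF
      exact congrFun hz2 ⟨m, hm⟩
    · -- agreement outside C
      intro m hmF hmC
      exact congrFun hz1 ⟨m, ⟨hmF, hmC⟩⟩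
  choose! Φ hΦ using claim
  -- the pair map is injective
  have hinj : Set.InjOn (fun q => (Φ q, fun c : ↥C => q ⟨c.1, hCF c.2⟩)) A := by
    intro q hq q' hq' heq
    have h1 : Φ q = Φ q' := congrArg Prod.fst heq
    have h2 : (fun c : ↥C => q ⟨c.1, hCF c.2⟩) = fun c : ↥C => q' ⟨c.1, hCF c.2⟩ :=
      congrArg Prod.snd heq
    funext ⟨m, hmF⟩
    by_cases hmC : m ∈ C
    · exact congrFun h2 ⟨m, hmC⟩
    · calc q ⟨m, hmF⟩ = Φ q ⟨m, hmF⟩ := ((hΦ q hq).2 m hmF hmC).symm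
        _ = Φ q' ⟨m, hmF⟩ := by rw [h1]
        _ = q' ⟨m, hmF⟩ := (hΦ q' hq').2 m hmF hmC
  have hmapsto : ∀ q ∈ A, (Φ q, fun c : ↥C => q ⟨c.1, hCF c.2⟩) ∈
      (A ∩ E s) ×ˢ restr C X := by
    intro q hq
    refine ⟨(hΦ q hq).1, ?_⟩
    obtain ⟨x, hx, rfl⟩ := hq.1
    exact ⟨x, hx, rfl⟩
  have hCsub : Finite ↥C := (hF.subset hCF).to_subtype
  have hcount : A.ncard ≤ (A ∩ E s).ncard * (restr C X).ncard := by
    rw [← ncard_prod']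
    exact Set.ncard_le_ncard_of_injOn _ hmapsto hinj
      ((hAfin.inter_of_left _).prod (Set.toFinite _))
  -- |restr C X| ≤ ξ
  have hCtrans : C = R.act (R.coord s) '' R.clos S (R.ball S R.m0 θ) κ := by
    rw [hC, ← clos_translate R hS, ← ball_translate R hS, R.coord_act]
  have hCle : (restr C X).ncard ≤ ξ := by
    rw [hCtrans]
    exact ncard_restr_translate R H hX (hH s) _ hΞ
  have hξpos : 0 < ξ := by
    obtain ⟨x, hx⟩ := hXne
    exact (Set.ncard_pos hΞ).mpr ⟨_, restrict_mem_restr hx _⟩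
  -- arithmetic
  have hcount' : (A.ncard : ℝ) ≤ ((A ∩ E s).ncard : ℝ) * (ξ : ℝ) := by
    exact_mod_cast hcount.trans (Nat.mul_le_mul_left _ hCle)
  have hsplit : ((A ∩ E s).ncard : ℝ) + ((A \ E s).ncard : ℝ) = (A.ncard : ℝ) := by
    exact_mod_cast Set.ncard_inter_add_ncard_diff_eq_ncard A (E s) hAfin
  have hξR : (0 : ℝ) < (ξ : ℝ) := by exact_mod_cast hξpos
  have hinv : (ξ : ℝ)⁻¹ * (ξ : ℝ) = 1 := inv_mul_cancel₀ (ne_of_gt hξR)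
  have hinvnn : (0 : ℝ) ≤ (ξ : ℝ)⁻¹ := by positivity
  nlinarith [mul_le_mul_of_nonneg_left hcount' hinvnn]

end Core
section Main
variable [Group G] [Finite Q]

lemma iterate_step (R : CellSpace G M) (S : Set G) (hS : R.IsRightGenSet S)
    (H : Subgroup G) (hH : ∀ m : M, R.coord m ∈ H)
    (X : Set (M → Q)) (hX : IsSubshift R H X) (hXne : X.Nonempty)
    (κ : ℕ) (hsi : IsStronglyIrr R S H X κ)
    (F : Set M) (hF : F.Finite) (θ : ℕ)
    (T : Set M)
    (hT : ∀ t ∈ T, ∀ t' ∈ T, t ≠ t' →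
      ∀ a ∈ R.ball S t θ, ∀ b ∈ R.ball S t' θ, κ + 1 ≤ R.dist S a b)
    (p : (t : M) → ↥(R.ball S t θ) → Q)
    (hp : ∀ t ∈ T, p t ∈ restr (R.ball S t θ) X)
    (hΞ : (restr (R.clos S (R.ball S R.m0 θ) κ) X).Finite)
    (U : Set M) (hUfin : U.Finite) :
    U ⊆ T ∩ R.inter S F (θ + κ) →
    ((restr F X \ ⋃ t ∈ U, {q : ↥F → Q |
          ∀ (m : M) (hm : m ∈ R.ball S t θ) (hmF : m ∈ F),
            q ⟨m, hmF⟩ = p t ⟨m, hm⟩}).ncard : ℝ) ≤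
      (1 - ((restr (R.clos S (R.ball S R.m0 θ) κ) X).ncard : ℝ)⁻¹) ^ U.ncard *
        ((restr F X).ncard : ℝ) := by
  refine Set.Finite.induction_on (motive := fun U _ => U ⊆ T ∩ R.inter S F (θ + κ) →
      ((restr F X \ ⋃ t ∈ U, {q : ↥F → Q |
          ∀ (m : M) (hm : m ∈ R.ball S t θ) (hmF : m ∈ F),
            q ⟨m, hmF⟩ = p t ⟨m, hm⟩}).ncard : ℝ) ≤
      (1 - ((restr (R.clos S (R.ball S R.m0 θ) κ) X).ncard : ℝ)⁻¹) ^ U.ncard *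
        ((restr F X).ncard : ℝ)) U hUfin ?_ ?_
  · intro _
    simp only [Set.mem_empty_iff_false, Set.iUnion_of_empty, Set.iUnion_empty,
      Set.diff_empty, Set.ncard_empty, pow_zero, one_mul, le_refl]
  · intro a U haU hUfin ih hsub
    have haT : a ∈ T := (hsub (Set.mem_insert a U)).1
    have haF : a ∈ R.inter S F (θ + κ) := (hsub (Set.mem_insert a U)).2
    have hUsub : U ⊆ T ∩ R.inter S F (θ + κ) :=
      (Set.subset_insert a U).trans hsub
    have hUT : U ⊆ T := fun t ht => (hUsub ht).1
    have key := core_step R S hS H hH X hX hXne κ hsi F hF θ T hT p hp hΞ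
      a haT haF U hUT haU
    have hξ1 : 1 ≤ (restr (R.clos S (R.ball S R.m0 θ) κ) X).ncard := by
      obtain ⟨x, hx⟩ := hXne
      exact (Set.ncard_pos hΞ).mpr ⟨_, restrict_mem_restr hx _⟩
    have hfac : (0 : ℝ) ≤
        1 - ((restr (R.clos S (R.ball S R.m0 θ) κ) X).ncard : ℝ)⁻¹ := by
      have h1 : (1 : ℝ) ≤ ((restr (R.clos S (R.ball S R.m0 θ) κ) X).ncard : ℝ) := by
        exact_mod_cast hξ1
      have := inv_le_one_of_one_le₀ h1
      linarith
    have hrw : restr F X \ ⋃ t ∈ insert a U, {q : ↥F → Q |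
          ∀ (m : M) (hm : m ∈ R.ball S t θ) (hmF : m ∈ F),
            q ⟨m, hmF⟩ = p t ⟨m, hm⟩} =
        (restr F X \ ⋃ t ∈ U, {q : ↥F → Q |
          ∀ (m : M) (hm : m ∈ R.ball S t θ) (hmF : m ∈ F),
            q ⟨m, hmF⟩ = p t ⟨m, hm⟩}) \ {q : ↥F → Q |
          ∀ (m : M) (hm : m ∈ R.ball S a θ) (hmF : m ∈ F),
            q ⟨m, hmF⟩ = p a ⟨m, hm⟩} := by
      rw [Set.biUnion_insert, Set.diff_diff, Set.union_comm]
    rw [hrw, Set.ncard_insert_of_notMem haU hUfin, pow_succ]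
    calc ((_ : Set (↥F → Q)).ncard : ℝ) ≤ _ := key
      _ ≤ (1 - ((restr (R.clos S (R.ball S R.m0 θ) κ) X).ncard : ℝ)⁻¹) *
          ((1 - ((restr (R.clos S (R.ball S R.m0 θ) κ) X).ncard : ℝ)⁻¹) ^ U.ncard *
            ((restr F X).ncard : ℝ)) :=
        mul_le_mul_of_nonneg_left (ih hUsub) hfac
      _ = _ := by ring

end Main
theorem stmt9
    [Finite Q] (R : CellSpace G M) (S : Set G) (hS : R.IsRightGenSet S)
    (H : Subgroup G) (hH : ∀ m : M, R.coord m ∈ H)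
    (X : Set (M → Q)) (hX : IsSubshift R H X) (hXne : X.Nonempty)
    (κ : ℕ) (hsi : IsStronglyIrr R S H X κ)
    (F : Set M) (hF : F.Finite) (θ : ℕ)
    (T : Set M)
    (hT : ∀ t ∈ T, ∀ t' ∈ T, t ≠ t' →
      ∀ a ∈ R.ball S t θ, ∀ b ∈ R.ball S t' θ, κ + 1 ≤ R.dist S a b)
    (p : (t : M) → ↥(R.ball S t θ) → Q)
    (hp : ∀ t ∈ T, p t ∈ restr (R.ball S t θ) X) :
    ((restr F X \ ⋃ s ∈ T ∩ R.inter S F (θ + κ),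
        {q : ↥F → Q |
          ∀ (m : M) (hm : m ∈ R.ball S s θ) (hmF : m ∈ F),
            q ⟨m, hmF⟩ = p s ⟨m, hm⟩}).ncard : ℝ) ≤
      (1 - ((restr (R.clos S (R.ball S R.m0 θ) κ) X).ncard : ℝ)⁻¹) ^
          (T ∩ R.inter S F (θ + κ)).ncard *
        ((restr F X).ncard : ℝ) := by
  by_cases hΞ : (restr (R.clos S (R.ball S R.m0 θ) κ) X).Finite
  · have hTfin : (T ∩ R.inter S F (θ + κ)).Finite :=
      hF.subset (fun t ht => ht.2.1)
    exact iterate_step R S hS H hH X hX hXne κ hsi F hF θ T hT p hp hΞ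
      (T ∩ R.inter S F (θ + κ)) hTfin (le_refl _)
  · have h0 : (restr (R.clos S (R.ball S R.m0 θ) κ) X).ncard = 0 :=
      Set.Infinite.ncard hΞ
    rw [h0]
    simp only [Nat.cast_zero, inv_zero, sub_zero, one_pow, one_mul]
    have hFsub : Finite ↥F := hF.to_subtype
    exact_mod_cast Set.ncard_le_ncard Set.diff_subset (Set.toFinite _)

end GoE
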